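/- Fix a real p with 0 < p < 1, and for I ∈ (0,1) define the spiking period T_p(I) = ∫_{−1}^{1} dy / ((1−I)·|y|^p + I) of the monomial phase model with threshold 1 and reset −1. Then the onset firing rate is nonzero: lim_{I→0⁺} 1/T_p(I) = (1−p)/2. In particular the F-I curve r(I) = 1/T_p(I) is discontinuous at I = 0 (since r(I) = 0 for I ≤ 0). -/

import Mathlib

open Filter MeasureTheory

section auxMonomial
variable {p : ℝ}

private lemma monAux_int01 (hp0 : 0 < p) (hp1 : p < 1) :
    IntervalIntegrable (fun y : ℝ => |y| ^ (-p)) volume 0 1 := by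
  have h : (-1 : ℝ) < -p := by linarith
  refine (intervalIntegral.intervalIntegrable_rpow' h (a := 0) (b := 1)).congr ?_
  have he : Set.uIoc (0:ℝ) 1 = Set.Ioc 0 1 := Set.uIoc_of_le zero_le_one
  refine fun y hy => ?_
  rw [he] at hy
  show y ^ (-p) = |y| ^ (-p)
  rw [abs_of_pos hy.1]

private lemma monAux_int_neg (hp0 : 0 < p) (hp1 : p < 1) :
    IntervalIntegrable (fun y : ℝ => |y| ^ (-p)) volume (-1) 0 := by
  have := (IntervalIntegrable.iff_comp_neg (f := fun y : ℝ => |y| ^ (-p)) (a := 0) (b := 1)).mp (monAux_int01 hp0 hp1)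
  simp only [abs_neg, neg_zero] at this
  exact this.symm

private lemma monAux_int (hp0 : 0 < p) (hp1 : p < 1) :
    IntervalIntegrable (fun y : ℝ => |y| ^ (-p)) volume (-1) 1 :=
  (monAux_int_neg hp0 hp1).trans (monAux_int01 hp0 hp1)

private lemma monAux_val (hp0 : 0 < p) (hp1 : p < 1) :
    (∫ y in (-1:ℝ)..1, |y| ^ (-p)) = 2 / (1 - p) := by
  have h : (-1 : ℝ) < -p := by linarith
  have h01 : (∫ y in (0:ℝ)..1, |y| ^ (-p)) = 1 / (1 - p) := by
    rw [intervalIntegral.integral_congr (g := fun y : ℝ => y ^ (-p))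
      (fun y hy => by
        rw [Set.uIcc_of_le zero_le_one] at hy
        show |y| ^ (-p) = y ^ (-p)
        rw [abs_of_nonneg hy.1])]
    rw [integral_rpow (Or.inl h)]
    rw [Real.one_rpow, Real.zero_rpow (by linarith)]
    ring_nf
  have hneg : (∫ y in (-1:ℝ)..0, |y| ^ (-p)) = ∫ y in (0:ℝ)..1, |y| ^ (-p) := by
    have := intervalIntegral.integral_comp_neg (fun y : ℝ => |y| ^ (-p)) (a := 0) (b := 1)
    simp only [abs_neg, neg_zero] at this
    exact this.symm
  rw [← intervalIntegral.integral_add_adjacent_intervals (monAux_int_neg hp0 hp1)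
    (monAux_int01 hp0 hp1), hneg, h01]
  ring

end auxMonomial

/-- Fix a real `p` with `0 < p < 1`, and for `I ∈ (0,1)` define
the spiking period `T_p I = ∫ y in -1..1, 1 / ((1 - I) * |y|^p + I)` of the
monomial phase model with threshold `1` and reset `-1`.  Then the onset firing
rate is nonzero: `lim_{I→0⁺} 1 / T_p I = (1 - p) / 2`.  In particular the F-I
curve `r I = 1 / T_p I` for `I > 0` (with `r I = 0` for `I ≤ 0`) is
discontinuous at `I = 0`. -/
theorem monomial_phase_onset_rate_nonzero
    (p : ℝ) (hp0 : 0 < p) (hp1 : p < 1)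
    (T : ℝ → ℝ)
    (hT : ∀ I : ℝ, T I = ∫ y in (-1 : ℝ)..1, 1 / ((1 - I) * |y| ^ p + I))
    (r : ℝ → ℝ) (hr : ∀ I : ℝ, r I = if 0 < I then 1 / T I else 0) :
    Tendsto (fun I : ℝ => 1 / T I) (nhdsWithin 0 (Set.Ioi 0))
        (nhds ((1 - p) / 2)) ∧
      ¬ ContinuousAt r 0 := by
  have hL : (2 : ℝ) / (1 - p) ≠ 0 := by
    apply div_ne_zero <;> [norm_num; linarith]
  have h0 : ∀ᵐ y : ℝ, y ≠ 0 := by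
    refine MeasureTheory.ae_iff.mpr ?_
    simp [Set.setOf_eq_eq_singleton']
  have hmain : Tendsto (fun I : ℝ => ∫ y in (-1:ℝ)..1, 1 / ((1 - I) * |y| ^ p + I))
      (nhdsWithin 0 (Set.Ioi 0)) (nhds (∫ y in (-1:ℝ)..1, |y| ^ (-p))) := by
    apply intervalIntegral.tendsto_integral_filter_of_dominated_convergence
      (bound := fun y => 2 * |y| ^ (-p))
    · -- measurability
      filter_upwards [Ioo_mem_nhdsGT_of_mem
        (Set.mem_Ico.mpr ⟨le_refl (0:ℝ), one_pos⟩)] with I hI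
      apply Continuous.aestronglyMeasurable
      apply Continuous.div continuous_const
      · exact (continuous_const.mul
          (continuous_abs.rpow_const fun y => Or.inr hp0.le)).add continuous_const
      · intro y
        have h1 : 0 ≤ (1 - I) * |y| ^ p :=
          mul_nonneg (by linarith [hI.2]) (Real.rpow_nonneg (abs_nonneg y) p)
        nlinarith [hI.1]
    · -- bound
      filter_upwards [Ioo_mem_nhdsGT_of_mem
        (Set.mem_Ico.mpr ⟨le_refl (0:ℝ), (by norm_num : (0:ℝ) < 1/2)⟩)] with I hI
      filter_upwards [h0] with y hy _
      have hya : 0 < |y| := abs_pos.mpr hy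
      have hc : 0 < |y| ^ p := Real.rpow_pos_of_pos hya p
      have hD : (1:ℝ)/2 * |y| ^ p ≤ (1 - I) * |y| ^ p + I := by
        nlinarith [hI.1, hI.2.le]
      have hDpos : 0 < (1 - I) * |y| ^ p + I :=
        lt_of_lt_of_le (by positivity) hD
      rw [Real.norm_eq_abs, abs_of_pos (by positivity), Real.rpow_neg (abs_nonneg y)]
      have hle := one_div_le_one_div_of_le (by positivity : (0:ℝ) < 1/2 * |y| ^ p) hD
      have heq : 1 / ((1:ℝ)/2 * |y| ^ p) = 2 * (|y| ^ p)⁻¹ := by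
        rw [one_div, mul_inv]; norm_num
      linarith
    · -- bound integrable
      exact (monAux_int hp0 hp1).const_mul 2
    · -- pointwise limit
      filter_upwards [h0] with y hy _
      have hya : 0 < |y| := abs_pos.mpr hy
      have hc : 0 < |y| ^ p := Real.rpow_pos_of_pos hya p
      have hcont : ContinuousAt (fun I : ℝ => 1 / ((1 - I) * |y| ^ p + I)) 0 := by
        apply ContinuousAt.div continuousAt_const
        · fun_prop
        · simpa using hc.ne'
      have ht : Tendsto (fun I : ℝ => 1 / ((1 - I) * |y| ^ p + I))
          (nhdsWithin 0 (Set.Ioi 0)) (nhds (1 / ((1 - (0:ℝ)) * |y| ^ p + 0))) :=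
        hcont.tendsto.mono_left nhdsWithin_le_nhds
      have hval : |y| ^ (-p) = 1 / ((1 - (0:ℝ)) * |y| ^ p + 0) := by
        rw [Real.rpow_neg (abs_nonneg y), one_div]
        norm_num
      rw [hval]
      exact ht
  rw [monAux_val hp0 hp1] at hmain
  have hT2 : Tendsto T (nhdsWithin 0 (Set.Ioi 0)) (nhds (2 / (1 - p))) :=
    hmain.congr fun I => (hT I).symm
  have h1 : Tendsto (fun I : ℝ => 1 / T I) (nhdsWithin 0 (Set.Ioi 0))
      (nhds ((1 - p) / 2)) := by
    have := hT2.inv₀ hL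
    rw [inv_div] at this
    simpa [one_div] using this
  refine ⟨h1, fun hcont => ?_⟩
  have h2 : Tendsto r (nhdsWithin 0 (Set.Ioi 0)) (nhds 0) := by
    have h := hcont.tendsto.mono_left (nhdsWithin_le_nhds (s := Set.Ioi (0:ℝ)))
    simpa [hr 0] using h
  have h3 : Tendsto (fun I : ℝ => 1 / T I) (nhdsWithin 0 (Set.Ioi 0)) (nhds 0) := by
    refine h2.congr' ?_
    filter_upwards [self_mem_nhdsWithin] with I hI
    rw [hr I, if_pos (show (0:ℝ) < I from hI)]
  have := tendsto_nhds_unique h1 h3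
  have : (1 - p) / 2 > 0 := by linarith
  linarith [tendsto_nhds_unique h1 h3]
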